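/- The sequence (F_n) from the geometric construction converges uniformly on [0,1]; its limit F is continuous, monotone increasing, satisfies F(0) = 0 and F(1) = 1, and is constant on each connected component of [0,1] \ C (on which F agrees with F_n for all sufficiently large n); in particular F′(x) = 0 for every x ∈ [0,1] \ C. -/

import Mathlib

/-- The stages of the construction of the Cantor ternary set:
`C_0 = [0,1]`, `C_{n+1} = (1/3)·C_n ∪ (2/3 + (1/3)·C_n)`. -/
def preCantor : ℕ → Set ℝ
  | 0 => Set.Icc 0 1
  | n + 1 => (fun x : ℝ => x / 3) '' preCantor n ∪ (fun x : ℝ => 2 / 3 + x / 3) '' preCantor n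

/-- The Cantor ternary set `C = ⋂ n, C_n`. -/
def cantorC : Set ℝ := ⋂ n, preCantor n

/-- The first polygonal approximation `F₁` to the Cantor–Lebesgue function. -/
noncomputable def cantorPolyBase (x : ℝ) : ℝ :=
  if x ≤ 1 / 3 then (3 / 2) * x
  else if x < 2 / 3 then 1 / 2
  else (3 / 2) * x - 1 / 2

/-- The polygonal approximations to the Cantor–Lebesgue function;
`cantorPoly n` is the function `F_{n+1}` of the geometric construction. -/
noncomputable def cantorPoly : ℕ → ℝ → ℝ
  | 0 => cantorPolyBase
  | n + 1 => fun x =>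
      if x ≤ 1 / 3 then (1 / 2) * cantorPoly n (3 * x)
      else if x < 2 / 3 then cantorPoly n x
      else (1 / 2) * cantorPoly n (3 * x - 2) + 1 / 2

open Set Filter

lemma cp_succ (n : ℕ) (x : ℝ) : cantorPoly (n+1) x =
    if x ≤ 1/3 then (1/2) * cantorPoly n (3*x)
    else if x < 2/3 then cantorPoly n x
    else (1/2) * cantorPoly n (3*x-2) + 1/2 := by
  simp only [cantorPoly]

lemma cp_succ_left {n : ℕ} {x : ℝ} (h : x ≤ 1/3) :
    cantorPoly (n+1) x = (1/2) * cantorPoly n (3*x) := by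
  rw [cp_succ, if_pos h]

lemma cp_succ_mid {n : ℕ} {x : ℝ} (h1 : 1/3 < x) (h2 : x < 2/3) :
    cantorPoly (n+1) x = cantorPoly n x := by
  rw [cp_succ, if_neg (not_le.mpr h1), if_pos h2]

lemma cp_succ_right {n : ℕ} {x : ℝ} (h : 2/3 ≤ x) :
    cantorPoly (n+1) x = (1/2) * cantorPoly n (3*x-2) + 1/2 := by
  rw [cp_succ, if_neg (by linarith), if_neg (not_lt.mpr h)]

lemma cp_mid : ∀ (n : ℕ) (x : ℝ), 1/3 < x → x < 2/3 → cantorPoly n x = 1/2 := by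
  intro n
  induction n with
  | zero =>
    intro x h1 h2
    show cantorPolyBase x = 1/2
    rw [cantorPolyBase, if_neg (not_le.mpr h1), if_pos h2]
  | succ m ih =>
    intro x h1 h2
    rw [cp_succ_mid h1 h2]
    exact ih x h1 h2

lemma cp_zero : ∀ n : ℕ, cantorPoly n 0 = 0 := by
  intro n
  induction n with
  | zero => show cantorPolyBase 0 = 0; rw [cantorPolyBase, if_pos (by norm_num)]; ring
  | succ m ih =>
    rw [cp_succ_left (by norm_num)]
    norm_num [ih]

lemma cp_one : ∀ n : ℕ, cantorPoly n 1 = 1 := by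
  intro n
  induction n with
  | zero =>
    show cantorPolyBase 1 = 1
    rw [cantorPolyBase, if_neg (by norm_num), if_neg (by norm_num)]; ring
  | succ m ih =>
    rw [cp_succ_right (by norm_num)]
    norm_num [ih]

lemma cp_third (n : ℕ) : cantorPoly n (1/3) = 1/2 := by
  cases n with
  | zero => show cantorPolyBase (1/3) = 1/2; rw [cantorPolyBase, if_pos le_rfl]; ring
  | succ m =>
    rw [cp_succ_left le_rfl]
    norm_num [cp_one m]

lemma cp_twothird (n : ℕ) : cantorPoly n (2/3) = 1/2 := by
  cases n with
  | zero =>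
    show cantorPolyBase (2/3) = 1/2
    rw [cantorPolyBase, if_neg (by norm_num), if_neg (by norm_num)]; ring
  | succ m =>
    rw [cp_succ_right le_rfl]
    norm_num [cp_zero m]

lemma cp_mono : ∀ (n : ℕ), ∀ x ∈ Icc (0:ℝ) 1, ∀ y ∈ Icc (0:ℝ) 1, x ≤ y →
    cantorPoly n x ≤ cantorPoly n y := by
  intro n
  induction n with
  | zero =>
    rintro x ⟨hx0, hx1⟩ y ⟨hy0, hy1⟩ hxy
    show cantorPolyBase x ≤ cantorPolyBase y
    unfold cantorPolyBase
    split_ifs <;> linarith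
  | succ m ih =>
    have h0 := cp_zero m
    have h1 := cp_one m
    have hb : ∀ z ∈ Icc (0:ℝ) 1, cantorPoly m z ∈ Icc (0:ℝ) 1 := by
      intro z hz
      constructor
      · have := ih 0 (by norm_num) z hz hz.1; linarith
      · have := ih z hz 1 (by norm_num) hz.2; linarith
    rintro x ⟨hx0, hx1⟩ y ⟨hy0, hy1⟩ hxy
    rcases le_or_gt x (1/3) with hx | hx
    · rcases le_or_gt y (1/3) with hy | hy
      · rw [cp_succ_left hx, cp_succ_left hy]
        have := ih (3*x) ⟨by linarith, by linarith⟩ (3*y) ⟨by linarith, by linarith⟩ (by linarith)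
        linarith
      · rcases lt_or_ge y (2/3) with hy2 | hy2
        · rw [cp_succ_left hx, cp_succ_mid hy hy2, cp_mid m y hy hy2]
          have := (hb (3*x) ⟨by linarith, by linarith⟩).2
          linarith
        · rw [cp_succ_left hx, cp_succ_right hy2]
          have := (hb (3*x) ⟨by linarith, by linarith⟩).2
          have := (hb (3*y-2) ⟨by linarith, by linarith⟩).1
          linarith
    · rcases lt_or_ge x (2/3) with hx2 | hx2
      · rcases le_or_gt y (1/3) with hy | hy
        · linarith
        · rcases lt_or_ge y (2/3) with hy2 | hy2
          · rw [cp_succ_mid hx hx2, cp_succ_mid hy hy2, cp_mid m x hx hx2, cp_mid m y hy hy2]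
          · rw [cp_succ_mid hx hx2, cp_mid m x hx hx2, cp_succ_right hy2]
            have := (hb (3*y-2) ⟨by linarith, by linarith⟩).1
            linarith
      · rcases le_or_gt y (1/3) with hy | hy
        · linarith
        · rcases lt_or_ge y (2/3) with hy2 | hy2
          · linarith
          · rw [cp_succ_right hx2, cp_succ_right hy2]
            have := ih (3*x-2) ⟨by linarith, by linarith⟩ (3*y-2) ⟨by linarith, by linarith⟩
              (by linarith)
            linarith

lemma cp_mem (n : ℕ) : ∀ z ∈ Icc (0:ℝ) 1, cantorPoly n z ∈ Icc (0:ℝ) 1 := by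
  intro z hz
  constructor
  · have := cp_mono n 0 (by norm_num) z hz hz.1; rw [cp_zero] at this; linarith
  · have := cp_mono n z hz 1 (by norm_num) hz.2; rw [cp_one] at this; linarith

lemma cp_cont : ∀ n : ℕ, Continuous (cantorPoly n) := by
  have tri : ∀ (x A B C : ℝ), (if x ≤ 1/3 then A else if x < 2/3 then B else C)
      = (if x ≤ 1/3 then A else if (2:ℝ)/3 ≤ x then C else B) := by
    intro x A B C
    rcases le_or_gt x (1/3) with h | h
    · rw [if_pos h, if_pos h]
    · rw [if_neg (not_le.mpr h), if_neg (not_le.mpr h)]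
      rcases lt_or_ge x (2/3) with h2 | h2
      · rw [if_pos h2, if_neg (not_le.mpr h2)]
      · rw [if_neg (not_lt.mpr h2), if_pos h2]
  intro n
  induction n with
  | zero =>
    have key : cantorPoly 0 = fun x : ℝ =>
        if x ≤ 1/3 then (3/2)*x else if (2:ℝ)/3 ≤ x then (3/2)*x - 1/2 else 1/2 := by
      funext x
      show cantorPolyBase x = _
      rw [cantorPolyBase]
      exact tri x _ _ _
    rw [key]
    apply Continuous.if_le
    · fun_prop
    · apply Continuous.if_le (by fun_prop) (by fun_prop) (by fun_prop) (by fun_prop)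
      intro x hx; rw [← hx]; norm_num
    · fun_prop
    · fun_prop
    · intro x hx
      rw [hx, if_neg (by norm_num)]
      norm_num
  | succ m ih =>
    have key : cantorPoly (m+1) = fun x : ℝ =>
        if x ≤ 1/3 then (1/2) * cantorPoly m (3*x)
        else if (2:ℝ)/3 ≤ x then (1/2) * cantorPoly m (3*x-2) + 1/2
        else cantorPoly m x := by
      funext x
      rw [cp_succ]
      exact tri x _ _ _
    rw [key]
    apply Continuous.if_le
    · fun_prop
    · apply Continuous.if_le (by fun_prop) (by fun_prop) (by fun_prop) (by fun_prop)
      intro x hx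
      rw [← hx]
      norm_num [cp_zero m, cp_twothird m]
    · fun_prop
    · fun_prop
    · intro x hx
      rw [hx, if_neg (by norm_num)]
      norm_num [cp_one m, cp_third m]

lemma cp_step : ∀ (n : ℕ) (x : ℝ), 0 ≤ x → x ≤ 1 →
    |cantorPoly (n+1) x - cantorPoly n x| ≤ (1/2)^n := by
  intro n
  induction n with
  | zero =>
    intro x h0 h1
    have ha := cp_mem 1 x ⟨h0, h1⟩
    have hb := cp_mem 0 x ⟨h0, h1⟩
    rw [abs_le]
    norm_num
    constructor <;> [linarith [ha.1, hb.2]; linarith [ha.2, hb.1]]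
  | succ m ih =>
    intro x h0 h1
    rcases le_or_gt x (1/3) with hx | hx
    · rw [cp_succ_left (n := m+1) hx, cp_succ_left (n := m) hx]
      rw [show (1/2) * cantorPoly (m+1) (3*x) - (1/2) * cantorPoly m (3*x)
          = (1/2) * (cantorPoly (m+1) (3*x) - cantorPoly m (3*x)) by ring, abs_mul]
      have := ih (3*x) (by linarith) (by linarith)
      rw [abs_of_nonneg (by norm_num : (0:ℝ) ≤ 1/2)]
      calc (1/2) * |cantorPoly (m+1) (3*x) - cantorPoly m (3*x)| ≤ (1/2) * (1/2)^m := by linarith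
        _ = (1/2)^(m+1) := by ring
    · rcases lt_or_ge x (2/3) with hx2 | hx2
      · rw [cp_mid (m+1+1) x hx hx2, cp_mid (m+1) x hx hx2]
        simp
      · rw [cp_succ_right (n := m+1) hx2, cp_succ_right (n := m) hx2]
        rw [show ((1/2) * cantorPoly (m+1) (3*x-2) + 1/2) - ((1/2) * cantorPoly m (3*x-2) + 1/2)
            = (1/2) * (cantorPoly (m+1) (3*x-2) - cantorPoly m (3*x-2)) by ring, abs_mul]
        have := ih (3*x-2) (by linarith) (by linarith)
        rw [abs_of_nonneg (by norm_num : (0:ℝ) ≤ 1/2)]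
        calc (1/2) * |cantorPoly (m+1) (3*x-2) - cantorPoly m (3*x-2)| ≤ (1/2) * (1/2)^m := by
              linarith
          _ = (1/2)^(m+1) := by ring

lemma pc_img1 (S : Set ℝ) : (fun x : ℝ => x / 3) '' S = (fun x : ℝ => 3 * x) ⁻¹' S := by
  ext z
  constructor
  · rintro ⟨y, hy, rfl⟩
    simpa [Set.mem_preimage] using (by rw [show 3 * (y/3) = y by ring]; exact hy :
      3 * (y/3) ∈ S)
  · intro hz
    exact ⟨3*z, hz, by ring⟩

lemma pc_img2 (S : Set ℝ) : (fun x : ℝ => 2/3 + x / 3) '' S = (fun x : ℝ => 3 * x - 2) ⁻¹' S := by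
  ext z
  constructor
  · rintro ⟨y, hy, rfl⟩
    show 3 * (2/3 + y/3) - 2 ∈ S
    rw [show 3 * (2/3 + y/3) - 2 = y by ring]
    exact hy
  · intro hz
    exact ⟨3*z - 2, hz, by ring⟩

lemma pc_succ (n : ℕ) : preCantor (n+1) =
    (fun x : ℝ => x / 3) '' preCantor n ∪ (fun x : ℝ => 2 / 3 + x / 3) '' preCantor n := rfl

lemma pc_closed : ∀ n : ℕ, IsClosed (preCantor n) := by
  intro n
  induction n with
  | zero => exact isClosed_Icc
  | succ m ih =>
    rw [pc_succ, pc_img1, pc_img2]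
    exact (ih.preimage (by fun_prop)).union (ih.preimage (by fun_prop))

lemma pc_zero_mem : ∀ n : ℕ, (0:ℝ) ∈ preCantor n := by
  intro n
  induction n with
  | zero => exact ⟨le_rfl, by norm_num⟩
  | succ m ih => exact Or.inl ⟨0, ih, by norm_num⟩

lemma pc_one_mem : ∀ n : ℕ, (1:ℝ) ∈ preCantor n := by
  intro n
  induction n with
  | zero => exact ⟨by norm_num, le_rfl⟩
  | succ m ih => exact Or.inr ⟨1, ih, by norm_num⟩

lemma pc_third_mem (n : ℕ) : (1/3 : ℝ) ∈ preCantor (n+1) :=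
  Or.inl ⟨1, pc_one_mem n, by norm_num⟩

lemma pc_twothird_mem (n : ℕ) : (2/3 : ℝ) ∈ preCantor (n+1) :=
  Or.inr ⟨0, pc_zero_mem n, by norm_num⟩

lemma pc_antitone : Antitone preCantor := by
  apply antitone_nat_of_succ_le
  intro n
  induction n with
  | zero =>
    rintro z (⟨y, hy, rfl⟩ | ⟨y, hy, rfl⟩)
    · exact ⟨by linarith [hy.1], by linarith [hy.2]⟩
    · exact ⟨by linarith [hy.1], by linarith [hy.2]⟩
  | succ m ih =>
    rintro z (⟨y, hy, rfl⟩ | ⟨y, hy, rfl⟩)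
    · exact Or.inl ⟨y, ih hy, rfl⟩
    · exact Or.inr ⟨y, ih hy, rfl⟩

lemma cp_interval : ∀ (N : ℕ) (a b : ℝ), 0 ≤ a → b ≤ 1 → a ≤ b →
    (∀ z ∈ Icc a b, z ∉ preCantor N) →
    ∃ (c : ℝ) (M : ℕ), ∀ n ≥ M, ∀ z ∈ Icc a b, cantorPoly n z = c := by
  intro N
  induction N with
  | zero =>
    intro a b ha hb hab hdis
    exact absurd ⟨ha, by linarith⟩ (hdis a ⟨le_rfl, hab⟩)
  | succ m ih =>
    intro a b ha hb hab hdis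
    have h3 : (1/3 : ℝ) ∉ Icc a b := fun h => hdis _ h (pc_third_mem m)
    have h6 : (2/3 : ℝ) ∉ Icc a b := fun h => hdis _ h (pc_twothird_mem m)
    rcases lt_or_ge b (1/3) with hb3 | hb3
    · -- left third
      have hdis' : ∀ z ∈ Icc (3*a) (3*b), z ∉ preCantor m := by
        intro z hz hmem
        exact hdis (z/3) ⟨by linarith [hz.1], by linarith [hz.2]⟩ (Or.inl ⟨z, hmem, rfl⟩)
      obtain ⟨c, M, hc⟩ := ih (3*a) (3*b) (by linarith) (by linarith) (by linarith) hdis'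
      refine ⟨(1/2)*c, M+1, ?_⟩
      intro n hn z hz
      obtain ⟨k, rfl⟩ : ∃ k, n = k + 1 := ⟨n - 1, by omega⟩
      rw [cp_succ_left (by linarith [hz.2])]
      rw [hc k (by omega) (3*z) ⟨by linarith [hz.1], by linarith [hz.2]⟩]
    · have ha3 : 1/3 < a := by
        rcases lt_or_ge (1/3 : ℝ) a with h | h
        · exact h
        · exact absurd ⟨h, hb3⟩ h3
      rcases lt_or_ge b (2/3) with hb6 | hb6
      · -- middle third
        refine ⟨1/2, 0, ?_⟩
        intro n _ z hz
        exact cp_mid n z (by linarith [hz.1]) (by linarith [hz.2])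
      · have ha6 : 2/3 < a := by
          rcases lt_or_ge (2/3 : ℝ) a with h | h
          · exact h
          · exact absurd ⟨h, hb6⟩ h6
        have hdis' : ∀ z ∈ Icc (3*a-2) (3*b-2), z ∉ preCantor m := by
          intro z hz hmem
          refine hdis (2/3 + z/3) ⟨by linarith [hz.1], by linarith [hz.2]⟩
            (Or.inr ⟨z, hmem, rfl⟩)
        obtain ⟨c, M, hc⟩ := ih (3*a-2) (3*b-2) (by linarith) (by linarith) (by linarith) hdis'
        refine ⟨(1/2)*c + 1/2, M+1, ?_⟩
        intro n hn z hz
        obtain ⟨k, rfl⟩ : ∃ k, n = k + 1 := ⟨n - 1, by omega⟩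
        rw [cp_succ_right (by linarith [hz.1])]
        rw [hc k (by omega) (3*z-2) ⟨by linarith [hz.1], by linarith [hz.2]⟩]
/-- The polygonal approximations converge uniformly on `[0,1]`; the limit `F` is
continuous, monotone increasing, has `F 0 = 0`, `F 1 = 1`, agrees with `F_n` for all
large `n` at each point of `[0,1] \ C`, is constant on each connected component of
`[0,1] \ C`, and has derivative `0` at every point of `[0,1] \ C`. -/
theorem cantorPoly_tendstoUniformly :
    ∃ F : ℝ → ℝ,
      TendstoUniformlyOn cantorPoly F Filter.atTop (Set.Icc 0 1) ∧
      ContinuousOn F (Set.Icc 0 1) ∧ MonotoneOn F (Set.Icc 0 1) ∧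
      F 0 = 0 ∧ F 1 = 1 ∧
      (∀ x ∈ Set.Icc (0 : ℝ) 1 \ cantorC, ∃ N : ℕ, ∀ n ≥ N, F x = cantorPoly n x) ∧
      (∀ x ∈ Set.Icc (0 : ℝ) 1 \ cantorC, ∀ y ∈ Set.Icc (0 : ℝ) 1 \ cantorC,
        x ≤ y → Set.Icc x y ∩ cantorC = ∅ → F x = F y) ∧
      ∀ x ∈ Set.Icc (0 : ℝ) 1 \ cantorC, HasDerivAt F 0 x := by
  classical
  set F : ℝ → ℝ := fun x => limUnder atTop (fun n => cantorPoly n x) with hF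
  have hd : ∀ x ∈ Icc (0:ℝ) 1, ∀ n, dist (cantorPoly n x) (cantorPoly (n+1) x) ≤ 1 * (1/2)^n := by
    intro x hx n
    rw [dist_comm, Real.dist_eq, one_mul]
    exact cp_step n x hx.1 hx.2
  have hcau : ∀ x ∈ Icc (0:ℝ) 1, CauchySeq (fun n => cantorPoly n x) := fun x hx =>
    cauchySeq_of_le_geometric (1/2) 1 (by norm_num) (hd x hx)
  have htend : ∀ x ∈ Icc (0:ℝ) 1, Tendsto (fun n => cantorPoly n x) atTop (nhds (F x)) :=
    fun x hx => (hcau x hx).tendsto_limUnder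
  have hdistF : ∀ x ∈ Icc (0:ℝ) 1, ∀ n, dist (cantorPoly n x) (F x) ≤ 2 * (1/2)^n := by
    intro x hx n
    have h := dist_le_of_le_geometric_of_tendsto (1/2) 1 (by norm_num) (hd x hx) (htend x hx) n
    calc dist (cantorPoly n x) (F x) ≤ 1*(1/2)^n/(1-1/2) := h
      _ = 2*(1/2)^n := by ring
  have hFeq : ∀ x ∈ Icc (0:ℝ) 1, ∀ (c : ℝ) (M : ℕ),
      (∀ n ≥ M, cantorPoly n x = c) → F x = c := by
    intro x hx c M h
    refine tendsto_nhds_unique (htend x hx) (Tendsto.congr' ?_ tendsto_const_nhds)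
    filter_upwards [eventually_ge_atTop M] with n hn
    exact (h n hn).symm
  have hNfind : ∀ a b : ℝ, a ≤ b → (∀ z ∈ Icc a b, z ∉ cantorC) →
      ∃ N, ∀ z ∈ Icc a b, z ∉ preCantor N := by
    intro a b hab hdis
    have hcov : Icc a b ⊆ ⋃ n, (preCantor n)ᶜ := by
      intro z hz
      have hz' : ¬ ∀ n, z ∈ preCantor n := by
        intro h; exact hdis z hz (Set.mem_iInter.mpr h)
      push_neg at hz'
      obtain ⟨n, hn⟩ := hz'
      exact Set.mem_iUnion.mpr ⟨n, hn⟩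
    obtain ⟨t, ht⟩ := isCompact_Icc.elim_finite_subcover (fun n => (preCantor n)ᶜ)
      (fun n => (pc_closed n).isOpen_compl) hcov
    refine ⟨t.sup id, fun z hz hmem => ?_⟩
    obtain ⟨n, hnt, hzn⟩ := Set.mem_iUnion₂.mp (ht hz)
    exact hzn (pc_antitone (Finset.le_sup (f := id) hnt) hmem)
  have hconst : ∀ a b : ℝ, 0 ≤ a → b ≤ 1 → a ≤ b → (∀ z ∈ Icc a b, z ∉ cantorC) →
      ∃ c, ∀ z ∈ Icc a b, F z = c := by
    intro a b ha hb hab hdis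
    obtain ⟨N, hN'⟩ := hNfind a b hab hdis
    obtain ⟨c, M, hc⟩ := cp_interval N a b ha hb hab hN'
    exact ⟨c, fun z hz => hFeq z ⟨by linarith [hz.1], by linarith [hz.2]⟩ c M
      (fun n hn => hc n hn z hz)⟩
  have htu : TendstoUniformlyOn cantorPoly F Filter.atTop (Set.Icc 0 1) := by
    rw [Metric.tendstoUniformlyOn_iff]
    intro ε hε
    have h2 : Tendsto (fun n : ℕ => 2*(1/2:ℝ)^n) atTop (nhds 0) := by
      have := (tendsto_pow_atTop_nhds_zero_of_lt_one (by norm_num : (0:ℝ) ≤ 1/2)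
        (by norm_num)).const_mul (2:ℝ)
      simpa using this
    filter_upwards [h2.eventually_lt_const hε] with n hn x hx
    calc dist (F x) (cantorPoly n x) = dist (cantorPoly n x) (F x) := dist_comm _ _
      _ ≤ 2*(1/2)^n := hdistF x hx n
      _ < ε := hn
  refine ⟨F, htu, htu.continuousOn (Filter.Eventually.of_forall fun n => (cp_cont n).continuousOn).frequently,
    fun x hx y hy hxy =>
      le_of_tendsto_of_tendsto' (htend x hx) (htend y hy) (fun n => cp_mono n x hx y hy hxy),
    hFeq 0 ⟨le_rfl, by norm_num⟩ 0 0 (fun n _ => cp_zero n),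
    hFeq 1 ⟨by norm_num, le_rfl⟩ 1 0 (fun n _ => cp_one n), ?_, ?_, ?_⟩
  · -- eventually agrees
    rintro x ⟨hx1, hx2⟩
    have hx2' : ¬ ∀ n, x ∈ preCantor n := fun h => hx2 (Set.mem_iInter.mpr h)
    push_neg at hx2'
    obtain ⟨N, hN'⟩ := hx2'
    have hsingle : ∀ z ∈ Icc x x, z ∉ preCantor N := by
      intro z hz
      have : z = x := le_antisymm hz.2 hz.1
      rw [this]; exact hN'
    obtain ⟨c, M, hc⟩ := cp_interval N x x hx1.1 hx1.2 le_rfl hsingle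
    refine ⟨M, fun n hn => ?_⟩
    rw [hFeq x hx1 c M (fun k hk => hc k hk x ⟨le_rfl, le_rfl⟩), hc n hn x ⟨le_rfl, le_rfl⟩]
  · -- constant on components
    rintro x ⟨hx1, -⟩ y ⟨hy1, -⟩ hxy hdis
    have hdis' : ∀ z ∈ Icc x y, z ∉ cantorC := by
      intro z hz hzC
      exact absurd (Set.eq_empty_iff_forall_notMem.mp hdis z ⟨hz, hzC⟩) (fun h => h)
    obtain ⟨c, hc⟩ := hconst x y hx1.1 hy1.2 hxy hdis'
    rw [hc x ⟨le_rfl, hxy⟩, hc y ⟨hxy, le_rfl⟩]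
  · -- derivative zero
    rintro x ⟨⟨hx0, hx1⟩, hxC⟩
    have hx0' : (0:ℝ) < x := lt_of_le_of_ne hx0 (by
      rintro rfl
      exact hxC (Set.mem_iInter.mpr pc_zero_mem))
    have hx1' : x < 1 := lt_of_le_of_ne hx1 (by
      intro h
      exact hxC (h ▸ Set.mem_iInter.mpr pc_one_mem))
    have hx2' : ¬ ∀ n, x ∈ preCantor n := fun h => hxC (Set.mem_iInter.mpr h)
    push_neg at hx2'
    obtain ⟨N, hN'⟩ := hx2'
    obtain ⟨ε, hε, hball⟩ := Metric.isOpen_iff.mp (pc_closed N).isOpen_compl x hN'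
    set δ := min (ε/2) (min x (1-x)) with hδ
    have hδ0 : 0 < δ := lt_min (by linarith) (lt_min hx0' (by linarith))
    have hδε : δ ≤ ε/2 := min_le_left _ _
    have hδx : δ ≤ x := le_trans (min_le_right _ _) (min_le_left _ _)
    have hδ1 : δ ≤ 1 - x := le_trans (min_le_right _ _) (min_le_right _ _)
    have hsub : ∀ z ∈ Icc (x-δ) (x+δ), z ∉ cantorC := by
      intro z hz hzC
      have hzN : z ∈ preCantor N := Set.mem_iInter.mp hzC N
      refine hball ?_ hzN
      rw [Metric.mem_ball, Real.dist_eq, abs_lt]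
      constructor <;> [linarith [hz.1]; linarith [hz.2]]
    obtain ⟨c, hc⟩ := hconst (x-δ) (x+δ) (by linarith) (by linarith) (by linarith) hsub
    have hev : F =ᶠ[nhds x] fun _ => c := by
      filter_upwards [Icc_mem_nhds (by linarith : x - δ < x) (by linarith : x < x + δ)] with z hz
      exact hc z hz
    exact (hasDerivAt_const x c).congr_of_eventuallyEq hev
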